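/- The generating function of the Thue-Morse sequence achieves only an approximation of the zero function of quality exp(−c (log(1−x))²): there exist constants c₁, c₂ > 0 such that for all x sufficiently close to 1 (x ∈ (x₀, 1) for some x₀ < 1), exp(−c₁ (log(1−x))²) ≤ |∑_{n=0}^{∞} t_n xⁿ| ≤ exp(−c₂ (log(1−x))²). -/

import Mathlib

set_option maxHeartbeats 1000000


/-- The Thue-Morse sequence on the alphabet `{-1, 1}`:
`t 0 = -1`, `t (2i) = t i`, `t (2i+1) = -t (2i)`. -/
def thueMorse : ℕ → ℤ
  | 0 => -1
  | n + 1 =>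
    have : (n + 1) / 2 < n + 1 := Nat.div_lt_self (Nat.succ_pos n) one_lt_two
    if (n + 1) % 2 = 0 then thueMorse ((n + 1) / 2) else -thueMorse ((n + 1) / 2)

lemma tm_cases (n : ℕ) : thueMorse n = 1 ∨ thueMorse n = -1 := by
  induction n using Nat.strong_induction_on with
  | _ n ih =>
    match n with
    | 0 => right; rw [thueMorse]
    | n+1 =>
      rw [thueMorse]
      rcases ih ((n+1)/2) (Nat.div_lt_self (Nat.succ_pos n) one_lt_two) with h | h <;>
        split <;> simp [h]

lemma tm_abs (n : ℕ) : |thueMorse n| = 1 := by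
  rcases tm_cases n with h | h <;> simp [h]

lemma tm_two_mul (i : ℕ) : thueMorse (2 * i) = thueMorse i := by
  match i with
  | 0 => rfl
  | i+1 =>
    have h : 2 * (i+1) = (2*i+1)+1 := by ring
    rw [h, thueMorse]
    have h2 : (2*i+1+1) % 2 = 0 := by omega
    have h3 : (2*i+1+1) / 2 = i+1 := by omega
    simp [h2, h3]

lemma tm_two_mul_add_one (i : ℕ) : thueMorse (2 * i + 1) = -thueMorse i := by
  rw [thueMorse]
  have h2 : (2*i+1) % 2 ≠ 0 := by omega
  have h3 : (2*i+1) / 2 = i := by omega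
  simp [h2, h3]

lemma tm_zero : thueMorse 0 = -1 := by rw [thueMorse]

noncomputable def tmF (x : ℝ) : ℝ := ∑' n : ℕ, (thueMorse n : ℝ) * x ^ n

lemma tm_norm (n : ℕ) : |(thueMorse n : ℝ)| = 1 := by
  rw [← Int.cast_abs, tm_abs]; norm_num

lemma tm_summable {x : ℝ} (h0 : 0 ≤ x) (h1 : x < 1) :
    Summable (fun n : ℕ => (thueMorse n : ℝ) * x ^ n) := by
  apply Summable.of_norm_bounded (summable_geometric_of_lt_one h0 h1)
  intro n
  rw [Real.norm_eq_abs, abs_mul, tm_norm, one_mul, abs_pow, abs_of_nonneg h0]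

lemma tm_norm_fun {x : ℝ} (h0 : 0 ≤ x) :
    (fun n : ℕ => ‖(thueMorse n : ℝ) * x ^ n‖) = fun n : ℕ => x ^ n := by
  funext n
  rw [Real.norm_eq_abs, abs_mul, tm_norm, one_mul, abs_pow, abs_of_nonneg h0]

lemma tmF_abs_le {x : ℝ} (h0 : 0 ≤ x) (h1 : x < 1) : |tmF x| ≤ (1 - x)⁻¹ := by
  have hn : Summable (fun n : ℕ => ‖(thueMorse n : ℝ) * x ^ n‖) := by
    rw [tm_norm_fun h0]; exact summable_geometric_of_lt_one h0 h1
  have := norm_tsum_le_tsum_norm hn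
  rwa [tm_norm_fun h0, tsum_geometric_of_lt_one h0 h1, Real.norm_eq_abs] at this

lemma tmF_abs_ge {x : ℝ} (h0 : 0 ≤ x) (h3 : x ≤ 1/3) : 1/2 ≤ |tmF x| := by
  have h1 : x < 1 := lt_of_le_of_lt h3 (by norm_num)
  have hs := tm_summable h0 h1
  have heq : tmF x = -1 + ∑' n : ℕ, (thueMorse (n+1) : ℝ) * x ^ (n+1) := by
    rw [tmF, Summable.tsum_eq_zero_add hs]
    simp [tm_zero]
  have hts : Summable (fun n : ℕ => (thueMorse (n+1) : ℝ) * x ^ (n+1)) :=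
    (summable_nat_add_iff 1).mpr hs
  have htail : |∑' n : ℕ, (thueMorse (n+1) : ℝ) * x ^ (n+1)| ≤ x * (1-x)⁻¹ := by
    calc |∑' n : ℕ, (thueMorse (n+1) : ℝ) * x ^ (n+1)|
        ≤ ∑' n : ℕ, ‖(thueMorse (n+1) : ℝ) * x ^ (n+1)‖ := by
          have hn : Summable (fun n : ℕ => ‖(thueMorse (n+1) : ℝ) * x ^ (n+1)‖) := by
            have := ((summable_nat_add_iff 1).mpr
              (summable_geometric_of_lt_one h0 h1) : Summable (fun n : ℕ => x ^ (n+1)))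
            refine this.congr fun n => ?_
            rw [Real.norm_eq_abs, abs_mul, tm_norm, one_mul, abs_pow, abs_of_nonneg h0]
          exact norm_tsum_le_tsum_norm hn
      _ = ∑' n : ℕ, x * x ^ n := by
          congr 1; funext n
          rw [Real.norm_eq_abs, abs_mul, tm_norm, one_mul, abs_pow, abs_of_nonneg h0,
            pow_succ, mul_comm]
      _ = x * (1-x)⁻¹ := by
          rw [tsum_mul_left, tsum_geometric_of_lt_one h0 h1]
  have hx2 : x * (1-x)⁻¹ ≤ 1/2 := by
    have h23 : (2:ℝ)/3 ≤ 1 - x := by linarith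
    have hi : (1-x)⁻¹ ≤ (2/3 : ℝ)⁻¹ := by
      apply inv_anti₀ (by norm_num) h23
    calc x * (1-x)⁻¹ ≤ (1/3) * (2/3 : ℝ)⁻¹ := by
          apply mul_le_mul h3 hi (by positivity) (by norm_num)
      _ = 1/2 := by norm_num
  have key : (1:ℝ) ≤ |(-1) + ∑' n : ℕ, (thueMorse (n+1) : ℝ) * x ^ (n+1)|
      + |∑' n : ℕ, (thueMorse (n+1) : ℝ) * x ^ (n+1)| := by
    have := abs_add_le ((-1) + ∑' n : ℕ, (thueMorse (n+1) : ℝ) * x ^ (n+1))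
      (-(∑' n : ℕ, (thueMorse (n+1) : ℝ) * x ^ (n+1)))
    simpa using this
  rw [heq]
  linarith

lemma tmF_funct {x : ℝ} (h0 : 0 ≤ x) (h1 : x < 1) : tmF x = (1 - x) * tmF (x^2) := by
  have h0' : 0 ≤ x^2 := sq_nonneg x
  have h1' : x^2 < 1 := by nlinarith
  have hs2 := tm_summable h0' h1'
  have he : Summable (fun k : ℕ => (thueMorse (2*k) : ℝ) * x ^ (2*k)) := by
    refine hs2.congr fun k => ?_
    rw [tm_two_mul, pow_mul]
  have ho : Summable (fun k : ℕ => (thueMorse (2*k+1) : ℝ) * x ^ (2*k+1)) := by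
    refine ((hs2.mul_left (-x)).congr fun k => ?_)
    rw [tm_two_mul_add_one]
    push_cast
    rw [← pow_mul]
    ring
  have key := tsum_even_add_odd (f := fun n : ℕ => (thueMorse n : ℝ) * x ^ n) he ho
  have e1 : ∑' k : ℕ, (thueMorse (2*k) : ℝ) * x ^ (2*k) = tmF (x^2) := by
    apply tsum_congr; intro k; rw [tm_two_mul, pow_mul]
  have e2 : ∑' k : ℕ, (thueMorse (2*k+1) : ℝ) * x ^ (2*k+1) = -x * tmF (x^2) := by
    rw [tmF, ← tsum_mul_left]
    apply tsum_congr; intro k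
    rw [tm_two_mul_add_one]; push_cast; rw [← pow_mul]; ring
  rw [tmF, ← key, e1, e2]; ring

lemma tmF_iter {x : ℝ} (h0 : 0 ≤ x) (h1 : x < 1) (m : ℕ) :
    tmF x = (∏ k ∈ Finset.range m, (1 - x ^ (2^k))) * tmF (x ^ (2^m)) := by
  induction m with
  | zero => simp
  | succ m ih =>
    rw [Finset.prod_range_succ, ih]
    have h0m : 0 ≤ x ^ (2^m) := pow_nonneg h0 _
    have h1m : x ^ (2^m) < 1 := pow_lt_one₀ h0 h1 (by positivity)
    have hee : (x ^ (2^m)) ^ 2 = x ^ (2^(m+1)) := by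
      rw [← pow_mul, pow_succ]
    rw [tmF_funct h0m h1m, hee]
    ring

lemma sum_range_cast_two (m : ℕ) :
    (∑ k ∈ Finset.range m, (k:ℝ)) * 2 = (m:ℝ) * ((m:ℝ) - 1) := by
  induction m with
  | zero => simp
  | succ n ih =>
    rw [Finset.sum_range_succ]
    push_cast
    nlinarith [ih]


lemma numeric_lower (a L M : ℝ) (ha1 : 0.693 < a) (ha2 : a < 0.694) (hL : 20 < L)
    (hM0 : 0 ≤ M) (hmu : M * a ≤ L + 2*a) : M * L + 1 ≤ 5 * L^2 := by
  have hL0 : (0:ℝ) < L := by linarith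
  have h1' : a * (M * L) ≤ L^2 + 2*a*L := by nlinarith [mul_le_mul_of_nonneg_right hmu hL0.le]
  have h2' : a * (M * L + 1) ≤ a * (5 * L^2) := by
    nlinarith [mul_nonneg (by linarith : (0:ℝ) ≤ a - 0.693) (sq_nonneg L),
      mul_nonneg (by linarith : (0:ℝ) ≤ 0.694 - a) hL0.le, sq_nonneg (L - 20),
      mul_nonneg hM0 hL0.le]
  exact (mul_le_mul_iff_right₀ (by linarith : (0:ℝ) < a)).mp h2'

lemma numeric_upper (a L B S : ℝ) (ha1 : 0.693 < a) (ha2 : a < 0.694) (hL : 20 < L)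
    (hml : L - a ≤ B) (hmu : B ≤ L + 2*a) (hS2 : 2*a*S = B^2 - a*B - 2*L*B) :
    S + 1 ≤ -(1/10)*L^2 := by
  have hL0 : (0:ℝ) < L := by linarith
  have h2aS : 2*a*S ≤ -(L-a)^2 := by
    have hp : (B - (L-a)) * (B - 2*L) ≤ 0 :=
      mul_nonpos_of_nonneg_of_nonpos (by linarith) (by linarith)
    nlinarith
  have hfin2 : 2*a*(S+1) ≤ 2*a*(-(1/10)*L^2) := by
    nlinarith [h2aS, mul_nonneg (by linarith : (0:ℝ) ≤ 0.694 - a) (sq_nonneg L),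
      mul_nonneg (by linarith : (0:ℝ) ≤ 0.694 - a) hL0.le, sq_nonneg (L - 20)]
  exact (mul_le_mul_iff_right₀ (by linarith : (0:ℝ) < 2*a)).mp hfin2

theorem tm_main :
    ∃ c₁ > (0 : ℝ), ∃ c₂ > (0 : ℝ), ∃ x₀ < (1 : ℝ), ∀ x ∈ Set.Ioo x₀ (1 : ℝ),
      Real.exp (-c₁ * Real.log (1 - x) ^ 2) ≤ |tmF x| ∧
      |tmF x| ≤ Real.exp (-c₂ * Real.log (1 - x) ^ 2) := by
  refine ⟨5, by norm_num, 1/10, by norm_num, 1 - Real.exp (-20), by have := Real.exp_pos (-20:ℝ); linarith, ?_⟩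
  rintro x ⟨hx₀, h1⟩
  set a : ℝ := Real.log 2 with ha_def
  have ha_lb : 0.693 < a := by
    have := Real.log_two_gt_d9; rw [← ha_def] at this; linarith
  have ha_ub : a < 0.694 := by
    have := Real.log_two_lt_d9; rw [← ha_def] at this; linarith
  have hexp1_lb : (2.718 : ℝ) < Real.exp 1 := by
    have := Real.exp_one_gt_d9; linarith
  have hexp1_ub : Real.exp 1 < 2.719 := by
    have := Real.exp_one_lt_d9; linarith
  set δ : ℝ := 1 - x with hδ_def
  have hδ0 : 0 < δ := by simp only [hδ_def]; linarith
  have hδ_ub : δ < Real.exp (-20) := by simp only [hδ_def]; linarith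
  set L : ℝ := -Real.log δ with hL_def
  have hL20 : 20 < L := by
    have := Real.log_lt_log hδ0 hδ_ub
    rw [Real.log_exp] at this
    simp only [hL_def]; linarith
  have hL0 : 0 < L := by linarith
  have hδexp : Real.exp (-L) = δ := by
    rw [hL_def, neg_neg, Real.exp_log hδ0]
  -- x is positive and at least 1/2
  have hexp20_lt : Real.exp (-20 : ℝ) < 1/2 := by
    have h2 : Real.exp (-20 : ℝ) ≤ Real.exp (-1 : ℝ) := Real.exp_le_exp.mpr (by norm_num)
    have h3 : Real.exp (-1 : ℝ) = (Real.exp 1)⁻¹ := by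
      rw [Real.exp_neg]
    have h4 : (Real.exp 1)⁻¹ < 1/2 := by
      rw [inv_lt_comm₀ (by positivity) (by norm_num)]
      linarith
    linarith
  have hxhalf : 1/2 < x := by
    simp only [hδ_def] at hδ_ub ⊢
    linarith
  have hx0 : 0 < x := by linarith
  have h0 : (0:ℝ) ≤ x := hx0.le
  -- epsilon = -log x
  set ε : ℝ := -Real.log x with hε_def
  have hε0 : 0 < ε := by
    simp only [hε_def]
    have := Real.log_neg hx0 h1
    linarith
  have hεδ : δ ≤ ε := by
    have := Real.log_le_sub_one_of_pos hx0
    simp only [hε_def, hδ_def]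
    linarith
  have hε2δ : ε ≤ 2 * δ := by
    have h := Real.log_le_sub_one_of_pos (inv_pos.mpr hx0)
    rw [Real.log_inv] at h
    have hxi : x⁻¹ - 1 = δ / x := by
      rw [hδ_def]
      field_simp
    rw [hxi] at h
    have : δ / x ≤ 2 * δ := by
      rw [div_le_iff₀ hx0]
      nlinarith
    simp only [hε_def]
    linarith
  -- choice of m
  have hm : ∃ m : ℕ, x ^ (2^m) ≤ 1/3 := by
    obtain ⟨n, hn⟩ := exists_pow_lt_of_lt_one (by norm_num : (0:ℝ) < 1/3) h1
    exact ⟨n, le_trans (pow_le_pow_of_le_one h0 h1.le (Nat.lt_two_pow_self (n := n)).le) hn.le⟩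
  set m : ℕ := Nat.find hm with hm_def
  have hm1 : x ^ (2^m) ≤ 1/3 := Nat.find_spec hm
  have hmin : ∀ k < m, 1/3 < x ^ (2^k) := fun k hk => lt_of_not_ge (Nat.find_min hm hk)
  -- log 3 facts
  have hlog3_lb : 1 ≤ Real.log 3 := by
    rw [Real.le_log_iff_exp_le (by norm_num)]
    linarith
  have hlog3_ub : Real.log 3 ≤ 2 := by
    have := Real.log_le_sub_one_of_pos (by norm_num : (0:ℝ) < 3)
    linarith
  -- lower bound on m : L - a ≤ m * a
  have hml : L - a ≤ (m:ℝ) * a := by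
    have hlx : Real.log (x ^ (2^m)) ≤ Real.log (1/3) :=
      Real.log_le_log (pow_pos hx0 _) hm1
    rw [Real.log_pow, one_div, Real.log_inv] at hlx
    have h2m : Real.log 3 ≤ ((2:ℝ)^m) * ε := by
      push_cast at hlx
      simp only [hε_def]
      nlinarith
    have h2m' : (1:ℝ) ≤ ((2:ℝ)^m) * (2*δ) := by
      have hp : (0:ℝ) < (2:ℝ)^m := by positivity
      nlinarith
    have hinv : ((2*δ))⁻¹ ≤ (2:ℝ)^m := by
      rw [inv_le_iff_one_le_mul₀ (by positivity)]
      linarith [h2m']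
    have := Real.log_le_log (by positivity) hinv
    rw [Real.log_inv, Real.log_mul (by norm_num) (ne_of_gt hδ0)] at this
    have hlp : Real.log ((2:ℝ)^m) = (m:ℝ) * a := by
      rw [Real.log_pow]
    rw [hlp] at this
    simp only [hL_def]
    linarith
  -- upper bound on m : m * a ≤ L + 2 * a
  have hmu : (m:ℝ) * a ≤ L + 2 * a := by
    rcases Nat.eq_zero_or_pos m with hm0 | hmpos
    · rw [hm0]; push_cast; nlinarith
    · have hk := hmin (m-1) (by omega)
      have hlx : Real.log (1/3) < Real.log (x ^ (2^(m-1))) :=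
        Real.log_lt_log (by norm_num) hk
      rw [Real.log_pow, one_div, Real.log_inv] at hlx
      have h2m : ((2:ℝ)^(m-1)) * ε < Real.log 3 := by
        push_cast at hlx
        simp only [hε_def]
        nlinarith
      have h2m' : ((2:ℝ)^(m-1)) * δ < Real.log 3 := by
        have hp : (0:ℝ) < (2:ℝ)^(m-1) := by positivity
        nlinarith
      have hlt : ((2:ℝ)^(m-1)) < Real.log 3 * δ⁻¹ := by
        rw [← div_eq_mul_inv, lt_div_iff₀ hδ0]
        exact h2m'
      have hlog := Real.log_le_log (by positivity) hlt.le
      rw [Real.log_mul (by positivity) (by positivity), Real.log_inv] at hlog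
      have hlp : Real.log ((2:ℝ)^(m-1)) = ((m-1:ℕ):ℝ) * a := by
        rw [Real.log_pow]
      rw [hlp] at hlog
      have hll3 : Real.log (Real.log 3) ≤ a := by
        have h1' : Real.log (Real.log 3) ≤ Real.log 2 :=
          Real.log_le_log (by linarith) hlog3_ub
      
        exact h1'
      have hcast : ((m-1:ℕ):ℝ) = (m:ℝ) - 1 := by
        have : (1:ℕ) ≤ m := hmpos
        push_cast [Nat.cast_sub this]
        ring
      rw [hcast] at hlog
      simp only [hL_def] at *
      nlinarith
  -- the product
  set P : ℝ := ∏ k ∈ Finset.range m, (1 - x ^ (2^k)) with hP_def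
  have hfac0 : ∀ k ∈ Finset.range m, (0:ℝ) ≤ 1 - x ^ (2^k) := by
    intro k _
    have := pow_le_one₀ h0 h1.le (n := 2^k)
    linarith
  have hP0 : 0 ≤ P := Finset.prod_nonneg hfac0
  have habs : |tmF x| = P * |tmF (x ^ (2^m))| := by
    rw [tmF_iter h0 h1 m, abs_mul, abs_of_nonneg hP0]
  have h0m : (0:ℝ) ≤ x ^ (2^m) := pow_nonneg h0 _
  have htail_lb : 1/2 ≤ |tmF (x ^ (2^m))| := tmF_abs_ge h0m hm1
  have htail_ub : |tmF (x ^ (2^m))| ≤ 3/2 := by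
    have h1m : x ^ (2^m) < 1 := lt_of_le_of_lt hm1 (by norm_num)
    have hge : (2:ℝ)/3 ≤ 1 - x ^ (2^m) := by linarith
    have hi : (1 - x ^ (2^m))⁻¹ ≤ (2/3:ℝ)⁻¹ := inv_anti₀ (by norm_num) hge
    have := tmF_abs_le h0m h1m
    rw [show ((2:ℝ)/3)⁻¹ = 3/2 by norm_num] at hi
    linarith
  set M : ℝ := (m:ℝ) with hM_def
  have hM0 : (0:ℝ) ≤ M := Nat.cast_nonneg m
  -- lower bound on P
  have hPl : Real.exp (-(M * L)) ≤ P := by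
    have hdm : Real.exp (-(M * L)) = δ ^ m := by
      rw [show -(M * L) = (m:ℝ) * (-L) by rw [hM_def]; ring, Real.exp_nat_mul, hδexp]
    rw [hdm, hP_def]
    calc δ ^ m = ∏ _k ∈ Finset.range m, δ := by rw [Finset.prod_const, Finset.card_range]
      _ ≤ ∏ k ∈ Finset.range m, (1 - x ^ (2^k)) := by
          apply Finset.prod_le_prod (fun k _ => hδ0.le)
          intro k _
          have hle : x ^ (2^k) ≤ x ^ 1 := pow_le_pow_of_le_one h0 h1.le Nat.one_le_two_pow
          rw [pow_one] at hle
          simp only [hδ_def]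
          linarith
  -- upper bound on P
  set T : ℝ := ∑ k ∈ Finset.range m, (k:ℝ) with hT_def
  set S : ℝ := a * T - M * L with hS_def
  have hPu : P ≤ Real.exp S := by
    have hsum : S = ∑ k ∈ Finset.range m, ((k:ℝ) * a - L) := by
      rw [Finset.sum_sub_distrib, Finset.sum_const, Finset.card_range, nsmul_eq_mul,
        ← Finset.sum_mul, hS_def, hT_def, hM_def]
      ring
    rw [hsum, Real.exp_sum, hP_def]
    apply Finset.prod_le_prod hfac0
    intro k _
    have hexp_eq : Real.exp ((k:ℝ) * a - L) = 2 ^ k * δ := by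
      rw [sub_eq_add_neg, Real.exp_add, Real.exp_nat_mul, ha_def, Real.exp_log two_pos, hδexp]
    have hb := one_add_mul_le_pow (by linarith : (-2:ℝ) ≤ x - 1) (2^k)
    rw [show (1 + (x-1)) = x by ring] at hb
    rw [hexp_eq]
    push_cast at hb
    simp only [hδ_def]
    linarith
  have hgauss : T * 2 = M * (M - 1) := sum_range_cast_two m
  have hL2 : Real.log (1-x) ^ 2 = L ^ 2 := by
    have hlog : Real.log (1-x) = -L := by rw [hL_def, hδ_def, neg_neg]
    rw [hlog]
    ring
  set B : ℝ := M * a with hB_def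
  have hBl : L - a ≤ B := hml
  have hBu : B ≤ L + 2*a := hmu
  have hexpneg1 : Real.exp (-1 : ℝ) ≤ 1/2 := by
    rw [Real.exp_neg]
    rw [inv_le_comm₀ (Real.exp_pos 1) (by norm_num)]
    linarith
  constructor
  · -- lower bound
    have hkey : M * L + 1 ≤ 5 * L ^ 2 :=
      numeric_lower a L M ha_lb ha_ub hL20 hM0 hmu
    calc Real.exp (-5 * Real.log (1-x)^2)
        ≤ Real.exp (-(M*L) + -1) := by
          apply Real.exp_le_exp.mpr
          rw [hL2]
          linarith
      _ = Real.exp (-(M*L)) * Real.exp (-1) := Real.exp_add _ _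
      _ ≤ P * (1/2) := by
          apply mul_le_mul hPl hexpneg1 (Real.exp_pos _).le hP0
      _ ≤ P * |tmF (x ^ (2^m))| := by
          apply mul_le_mul_of_nonneg_left htail_lb hP0
      _ = |tmF x| := habs.symm
  · -- upper bound
    have hS2 : 2*a*S = B^2 - a*B - 2*L*B := by
      rw [hS_def, hB_def]
      linear_combination a^2 * hgauss
    have hfin : S + 1 ≤ -(1/10)*L^2 :=
      numeric_upper a L B S ha_lb ha_ub hL20 hBl hBu hS2
    calc |tmF x| = P * |tmF (x ^ (2^m))| := habs
      _ ≤ Real.exp S * (3/2) := by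
          apply mul_le_mul hPu htail_ub (abs_nonneg _) (Real.exp_pos _).le
      _ ≤ Real.exp S * Real.exp 1 := by
          apply mul_le_mul_of_nonneg_left (by linarith) (Real.exp_pos _).le
      _ = Real.exp (S + 1) := (Real.exp_add _ _).symm
      _ ≤ Real.exp (-(1/10) * Real.log (1-x)^2) := by
          apply Real.exp_le_exp.mpr
          rw [hL2]
          linarith

/-- the generating function of the Thue-Morse sequence achieves only an
approximation of the zero function of quality `exp(-c (log(1-x))²)`: there exist
`c₁, c₂ > 0` and `x₀ < 1` such that for all `x ∈ (x₀, 1)`,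
`exp(-c₁ (log(1-x))²) ≤ |∑ t_n xⁿ| ≤ exp(-c₂ (log(1-x))²)`. -/
theorem thueMorse_generating_function_approximation_quality :
    ∃ c₁ > (0 : ℝ), ∃ c₂ > (0 : ℝ), ∃ x₀ < (1 : ℝ), ∀ x ∈ Set.Ioo x₀ (1 : ℝ),
      Real.exp (-c₁ * Real.log (1 - x) ^ 2)
          ≤ |∑' n : ℕ, (thueMorse n : ℝ) * x ^ n| ∧
        |∑' n : ℕ, (thueMorse n : ℝ) * x ^ n|
          ≤ Real.exp (-c₂ * Real.log (1 - x) ^ 2) := tm_main
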